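/- Let S_λ be a weighted shift on a directed tree T with weights λ = {λ_v}_{v∈V°} such that E ⊆ D∞(S_λ), let u ∈ V be a vertex with Chi(u) ≠ ∅, and suppose that for every v ∈ Chi(u) the sequence {‖S_λⁿ e_v‖²}_{n≥0} is a Stieltjes moment sequence with representing measure μ_v. Then: (i) if Σ_{v∈Chi(u)} |λ_v|² ∫_0^∞ (1/s) dμ_v(s) ≤ 1, then {‖S_λⁿ e_u‖²}_{n≥0} is a Stieltjes moment sequence and the measure μ_u defined by μ_u(σ) = Σ_{v∈Chi(u)} |λ_v|² ∫_σ (1/s) dμ_v(s) + ε_u δ₀(σ), with ε_u = 1 − Σ_{v∈Chi(u)} |λ_v|² ∫_0^∞ (1/s) dμ_v(s), is a representing measure of it; (ii) if {‖S_λⁿ e_u‖²}_{n≥0} is a Stieltjes moment sequence and {‖S_λ^{n+1} e_u‖²}_{n≥0} is determinate, then Σ_{v∈Chi(u)} |λ_v|² ∫_0^∞ (1/s) dμ_v(s) ≤ 1, the sequence {‖S_λⁿ e_u‖²}_{n≥0} is determinate, and its unique representing measure is the measure μ_u defined above. -/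

import Mathlib

open Filter
open scoped ENNReal InnerProductSpace ComplexConjugate

attribute [local instance] Classical.propDecidable

noncomputable section

namespace Paper

universe u

/-- A directed tree: a directed graph which is connected (as an undirected graph), has no
(directed) circuits, and in which every vertex has at most one parent. -/
structure DirectedTree (V : Type*) where
  E : V → V → Prop
  connected : ∀ u v : V, Relation.ReflTransGen (fun a b => E a b ∨ E b a) u v
  noCircuits : ∀ v : V, ¬ Relation.TransGen E v v
  par_unique : ∀ ⦃u₁ u₂ v : V⦄, E u₁ v → E u₂ v → u₁ = u₂

namespace DirectedTree

variable {V : Type*} (t : DirectedTree V)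

/-- The set of children of a vertex. -/
def chi (u : V) : Set V := {v | t.E u v}

/-- `v` has a parent, i.e. `v ∈ V°`. -/
def hasPar (v : V) : Prop := ∃ u, t.E u v

/-- The parent partial function, as a total function with junk value `v` at parentless
vertices. -/
noncomputable def par (v : V) : V := if h : t.hasPar v then h.choose else v

/-- Children of a set of vertices. -/
def chiSet (W : Set V) : Set V := {v | ∃ u ∈ W, t.E u v}

/-- `n`-fold children of a set of vertices. -/
def chiIter : ℕ → Set V → Set V
  | 0, W => W
  | n + 1, W => t.chiSet (chiIter n W)

/-- `Chi^⟨n⟩(u)`. -/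
def chin (n : ℕ) (u : V) : Set V := t.chiIter n {u}

/-- The descendants of a vertex. -/
def des (u : V) : Set V := ⋃ n : ℕ, t.chin n u

/-- `λ_{u∣v} = ∏_{j=0}^{n-1} λ_{par^j(v)}` for `v ∈ Chi^⟨n⟩(u)`. -/
noncomputable def wprod (lam : V → ℂ) (n : ℕ) (v : V) : ℂ :=
  ∏ j ∈ Finset.range n, lam (t.par^[j] v)

end DirectedTree

/-- The Hilbert space `ℓ²(V)`. -/
abbrev H2 (V : Type*) := lp (fun _ : V => ℂ) 2

/-- The basis vector `e_u ∈ ℓ²(V)`. -/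
noncomputable def evec {V : Type*} (u : V) : H2 V :=
  haveI := Classical.decEq V
  lp.single 2 u 1

/-- The linear subspace `E = lin{e_u : u ∈ V}`. -/
noncomputable def espan (V : Type*) : Submodule ℂ (H2 V) :=
  Submodule.span ℂ (Set.range (evec : V → H2 V))

/-- The map `Λ_T` on all functions `V → ℂ`:
`(Λ_T f)(v) = λ_v f(par(v))` for `v ∈ V°` and `0` at the root. -/
noncomputable def lamLin {V : Type*} (t : DirectedTree V) (lam : V → ℂ) :
    (V → ℂ) →ₗ[ℂ] (V → ℂ) where
  toFun f := fun v => if t.hasPar v then lam v * f (t.par v) else 0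
  map_add' f g := by
    funext v
    by_cases h : t.hasPar v <;> simp [h, mul_add]
  map_smul' c f := by
    funext v
    by_cases h : t.hasPar v <;> simp [h] <;> ring

/-- The domain `{f ∈ ℓ²(V) : Λ_T f ∈ ℓ²(V)}` of the weighted shift. -/
noncomputable def shiftDom {V : Type*} (t : DirectedTree V) (lam : V → ℂ) :
    Submodule ℂ (H2 V) where
  carrier := {f | Memℓp (lamLin t lam f) 2}
  zero_mem' := by
    simpa only [Set.mem_setOf_eq, lp.coeFn_zero, map_zero] using zero_memℓp
  add_mem' := by
    intro f g hf hg
    simp only [Set.mem_setOf_eq, lp.coeFn_add, map_add] at *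
    exact hf.add hg
  smul_mem' := by
    intro c f hf
    simp only [Set.mem_setOf_eq] at hf ⊢
    rw [lp.coeFn_smul, LinearMap.map_smul]
    exact hf.const_smul c

/-- The weighted shift `S_λ` on the directed tree `T`, as an unbounded operator in `ℓ²(V)`. -/
noncomputable def shift {V : Type*} (t : DirectedTree V) (lam : V → ℂ) :
    H2 V →ₗ.[ℂ] H2 V where
  domain := shiftDom t lam
  toFun :=
    { toFun := fun f => (⟨lamLin t lam f, f.2⟩ : H2 V)
      map_add' := by
        intro f g
        apply lp.ext
        simp only [Submodule.coe_add, lp.coeFn_add, map_add]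
      map_smul' := by
        intro c f
        apply lp.ext
        simp only [SetLike.val_smul, lp.coeFn_smul, LinearMap.map_smul, RingHom.id_apply] }

section Operator

variable {H : Type*} [NormedAddCommGroup H] [InnerProductSpace ℂ H]

/-- `x ∈ D(Tⁿ)`. -/
def iterMem (T : H →ₗ.[ℂ] H) : ℕ → H → Prop
  | 0, _ => True
  | n + 1, x => ∃ h : x ∈ T.domain, iterMem T n (T ⟨x, h⟩)

/-- `Tⁿ x` (junk value `0` if undefined along the way). -/
noncomputable def iterApp (T : H →ₗ.[ℂ] H) : ℕ → H → H
  | 0, x => x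
  | n + 1, x => if h : x ∈ T.domain then iterApp T n (T ⟨x, h⟩) else 0

/-- The inner product in the paper's convention: `⟨x, y⟩` is linear in `x`. -/
noncomputable def pinner (x y : H) : ℂ := inner (𝕜 := ℂ) y x

/-- `E ⊆ D∞(S_λ)` where `E = lin{e_u : u ∈ V}`. -/
def spanDomInfty {V : Type*} (t : DirectedTree V) (lam : V → ℂ) : Prop :=
  ∀ f ∈ espan V, ∀ n : ℕ, iterMem (shift t lam) n f

/-- A linear subspace `F` is a core of `T` if the graph of `T` is contained in the closure of
the graph of `T|_F`. -/
def IsCore (T : H →ₗ.[ℂ] H) (F : Submodule ℂ H) : Prop :=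
  (T.graph : Set (H × H)) ⊆ closure ((T.domRestrict F).graph : Set (H × H))

/-- `f` is a quasi-analytic vector of `T`:
`f ∈ D∞(T)` and `∑_{n ≥ 1} ‖Tⁿ f‖^{-1/n} = ∞` (convention `1/0 = ∞`). -/
def QuasiAnalyticVec (T : H →ₗ.[ℂ] H) (f : H) : Prop :=
  (∀ n : ℕ, iterMem T n f) ∧
    ∑' n : ℕ, (ENNReal.ofReal (‖iterApp T (n + 1) f‖ ^ (1 / (n + 1 : ℝ))))⁻¹ = ∞

end Operator

section NormalSubnormal

/-- A normal operator: closed, densely defined, with `D(N) = D(N*)` and `‖N* h‖ = ‖N h‖` on the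
common domain. -/
structure IsNormalOp {K : Type*} [NormedAddCommGroup K] [InnerProductSpace ℂ K]
    [CompleteSpace K] (N : K →ₗ.[ℂ] K) : Prop where
  dense : Dense (N.domain : Set K)
  isClosed : N.IsClosed
  dom_adjoint : N.adjoint.domain = N.domain
  norm_adjoint : ∀ (x : K) (hx : x ∈ N.domain) (hx' : x ∈ N.adjoint.domain),
    ‖N.adjoint ⟨x, hx'⟩‖ = ‖N ⟨x, hx⟩‖

/-- A normal extension of `S`: a Hilbert space `K`, an isometric linear embedding `J : H → K`,
and a normal operator `N` in `K` with `N (J h) = J (S h)` for all `h ∈ D(S)`. -/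
structure NormalExtension {H : Type u} [NormedAddCommGroup H] [InnerProductSpace ℂ H]
    (S : H →ₗ.[ℂ] H) : Type (u + 1) where
  K : Type u
  [instNG : NormedAddCommGroup K]
  [instIP : InnerProductSpace ℂ K]
  [instCS : CompleteSpace K]
  J : H →ₗᵢ[ℂ] K
  N : K →ₗ.[ℂ] K
  normal : IsNormalOp N
  ext_prop : ∀ x : S.domain, ∃ hx : J x ∈ N.domain, N ⟨J x, hx⟩ = J (S x)

/-- A densely defined operator is subnormal if it has a normal extension. -/
def Subnormal {H : Type u} [NormedAddCommGroup H] [InnerProductSpace ℂ H]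
    (S : H →ₗ.[ℂ] H) : Prop :=
  Dense (S.domain : Set H) ∧ Nonempty (NormalExtension S)

/-- A hyponormal operator: densely defined, `D(S) ⊆ D(S*)` and `‖S* f‖ ≤ ‖S f‖` on `D(S)`. -/
def Hyponormal {H : Type*} [NormedAddCommGroup H] [InnerProductSpace ℂ H] [CompleteSpace H]
    (S : H →ₗ.[ℂ] H) : Prop :=
  Dense (S.domain : Set H) ∧ S.domain ≤ S.adjoint.domain ∧
    ∀ (x : H) (hx : x ∈ S.domain) (hx' : x ∈ S.adjoint.domain),
      ‖S.adjoint ⟨x, hx'⟩‖ ≤ ‖S ⟨x, hx⟩‖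

end NormalSubnormal

section Stieltjes

open MeasureTheory

/-- `μ` is a representing measure of `{t_n}`: a positive Borel measure on `ℝ₊`
with `t_n = ∫_0^∞ sⁿ dμ(s)` for all `n`. -/
def IsRepMeasure (μ : Measure ℝ) (t : ℕ → ℝ) : Prop :=
  μ (Set.Iio 0) = 0 ∧ ∀ n : ℕ, Integrable (fun s => s ^ n) μ ∧ t n = ∫ s, s ^ n ∂μ

/-- `{t_n}` is a Stieltjes moment sequence. -/
def IsStieltjes (t : ℕ → ℝ) : Prop := ∃ μ : Measure ℝ, IsRepMeasure μ t

/-- A Stieltjes moment sequence is determinate if it has only one representing measure. -/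
def Determinate (t : ℕ → ℝ) : Prop :=
  ∀ ⦃μ ν : Measure ℝ⦄, IsRepMeasure μ t → IsRepMeasure ν t → μ = ν

/-- `∫_σ (1/s) dμ(s)`, with the convention `1/0 = ∞`. -/
noncomputable def recipInt (μ : Measure ℝ) (σ : Set ℝ) : ℝ≥0∞ :=
  ∫⁻ s in σ, (ENNReal.ofReal s)⁻¹ ∂μ

/-- The sequence `(θ, t_0, t_1, …)`. -/
def prepend (θ : ℝ) (t : ℕ → ℝ) : ℕ → ℝ
  | 0 => θ
  | n + 1 => t n

/-- `{t_n}` is positive definite. -/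
def PosDefSeq (t : ℕ → ℝ) : Prop :=
  ∀ (n : ℕ) (α : ℕ → ℂ),
    0 ≤ (∑ k ∈ Finset.range (n + 1), ∑ l ∈ Finset.range (n + 1),
      (t (k + l) : ℂ) * α k * (starRingEnd ℂ) (α l)).re

/-- The measure `ν_μ(σ) = ∫_σ (1/s) dμ(s) + (θ − ∫_0^∞ (1/s) dμ(s)) δ₀(σ)`. -/
noncomputable def numap (θ : ℝ) (μ : Measure ℝ) : Measure ℝ :=
  μ.withDensity (fun s => (ENNReal.ofReal s)⁻¹) +
    (ENNReal.ofReal θ - recipInt μ Set.univ) • Measure.dirac (0 : ℝ)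

/-- The measure `μ_ν(σ) = ∫_σ s dν(s)`. -/
noncomputable def mumap (ν : Measure ℝ) : Measure ℝ :=
  ν.withDensity fun s => ENNReal.ofReal s

end Stieltjes

section Consistency

open MeasureTheory

variable {V : Type*}

/-- The consistency condition \eqref{muu+} at the vertex `u`:
`μ_u(σ) = Σ_{v ∈ Chi(u)} |λ_v|² ∫_σ (1/s) dμ_v(s) + ε_u δ₀(σ)`. -/
def Consistent (t : DirectedTree V) (lam : V → ℂ) (μ : V → Measure ℝ) (ε : V → ℝ)
    (u : V) : Prop :=
  ∀ σ : Set ℝ, MeasurableSet σ →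
    μ u σ = (∑' v : t.chi u, ENNReal.ofReal (‖lam (v : V)‖ ^ 2) * recipInt (μ (v : V)) σ)
      + ENNReal.ofReal (ε u) * Measure.dirac (0 : ℝ) σ

/-- The measure `μ_u` from Lemma charsub2, built from the children measures:
`μ_u(σ) = Σ_{v ∈ Chi(u)} |λ_v|² ∫_σ (1/s) dμ_v(s) + ε_u δ₀(σ)` with
`ε_u = 1 − Σ_{v ∈ Chi(u)} |λ_v|² ∫_0^∞ (1/s) dμ_v(s)`. -/
noncomputable def consMeasure (t : DirectedTree V) (lam : V → ℂ) (μ : V → Measure ℝ)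
    (u : V) : Measure ℝ :=
  Measure.sum (fun v : t.chi u =>
      ENNReal.ofReal (‖lam (v : V)‖ ^ 2) •
        (μ (v : V)).withDensity fun s => (ENNReal.ofReal s)⁻¹) +
    (1 - ∑' v : t.chi u, ENNReal.ofReal (‖lam (v : V)‖ ^ 2) * recipInt (μ (v : V)) Set.univ) •
      Measure.dirac (0 : ℝ)

end Consistency

end Paper

open Paper MeasureTheory Filter
open scoped ENNReal


section ShiftPart

variable {V : Type*} (t : Paper.DirectedTree V) (lam : V → ℂ)

lemma hasPar_par_eq {u v : V} (h : t.E u v) : t.hasPar v ∧ t.par v = u := by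
  have hp : t.hasPar v := ⟨u, h⟩
  refine ⟨hp, ?_⟩
  rw [Paper.DirectedTree.par, dif_pos hp]
  exact t.par_unique hp.choose_spec h

lemma mem_chi_iff {u v : V} : v ∈ t.chi u ↔ t.hasPar v ∧ t.par v = u := by
  constructor
  · exact fun h => hasPar_par_eq t h
  · rintro ⟨hp, rfl⟩
    rw [Paper.DirectedTree.par, dif_pos hp]
    exact hp.choose_spec

lemma lamLin_iter (n : ℕ) (f : V → ℂ) (v : V) :
    (⇑(lamLin t lam))^[n] f v =
      if ∀ j < n, t.hasPar (t.par^[j] v) then t.wprod lam n v * f (t.par^[n] v) else 0 := by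
  induction n generalizing v with
  | zero => simp [Paper.DirectedTree.wprod]
  | succ n ih =>
    rw [Function.iterate_succ_apply']
    show (if t.hasPar v then lam v * ((⇑(lamLin t lam))^[n] f) (t.par v) else 0) = _
    by_cases hv : t.hasPar v
    · rw [if_pos hv, ih]
      by_cases hc : ∀ j < n, t.hasPar (t.par^[j] (t.par v))
      · rw [if_pos hc, if_pos]
        · rw [← Function.iterate_succ_apply, ← mul_assoc]
          congr 1
          rw [Paper.DirectedTree.wprod, Paper.DirectedTree.wprod, Finset.prod_range_succ']
          simp only [Function.iterate_succ_apply, Function.iterate_zero_apply]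
          ring
        · intro j hj
          cases j with
          | zero => simpa using hv
          | succ j =>
            rw [Function.iterate_succ_apply]
            exact hc j (by omega)
      · rw [if_neg hc, mul_zero, if_neg]
        intro hall
        exact hc fun j hj => by
          rw [← Function.iterate_succ_apply]
          exact hall (j + 1) (by omega)
    · rw [if_neg hv, if_neg]
      intro hall
      exact hv (by simpa using hall 0 (Nat.succ_pos n))

lemma shift_coe (x : Paper.H2 V) (hx : x ∈ (shift t lam).domain) :
    ⇑((shift t lam) ⟨x, hx⟩) = lamLin t lam ⇑x := rfl

lemma iterApp_coe (n : ℕ) (x : Paper.H2 V) (hx : iterMem (shift t lam) n x) :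
    ⇑(iterApp (shift t lam) n x) = (⇑(lamLin t lam))^[n] ⇑x := by
  induction n generalizing x with
  | zero => rfl
  | succ n ih =>
    obtain ⟨h, h2⟩ := hx
    show ⇑(iterApp (shift t lam) (n+1) x) = _
    rw [Paper.iterApp, dif_pos h, ih _ h2, shift_coe, Function.iterate_succ_apply]

lemma evec_coe (u w : V) : (evec u : V → ℂ) w = if w = u then 1 else 0 := by
  rw [Paper.evec, lp.single_apply]
  by_cases h : w = u
  · subst h; simp
  · simp [h]

end ShiftPart
section NormPart

variable {V : Type*} (t : Paper.DirectedTree V) (lam : V → ℂ)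

lemma esq (f : Paper.H2 V) :
    ENNReal.ofReal (‖f‖ ^ 2) = ∑' w : V, ENNReal.ofReal (‖f w‖ ^ 2) := by
  have hp : 0 < (2 : ℝ≥0∞).toReal := by norm_num
  have h1 := lp.norm_rpow_eq_tsum hp f
  have hs := (lp.memℓp f).summable hp
  have h2 : (2 : ℝ≥0∞).toReal = ((2 : ℕ) : ℝ) := by norm_num
  rw [h2] at h1 hs
  simp only [Real.rpow_natCast] at h1 hs
  rw [h1, ENNReal.ofReal_tsum_of_nonneg (fun w => by positivity) hs]

lemma pointwise (u : V) (n : ℕ) (w : V) :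
    ENNReal.ofReal (‖((⇑(lamLin t lam))^[n + 1] (⇑(evec u))) w‖ ^ 2)
      = ∑' v : t.chi u, ENNReal.ofReal (‖lam (v : V)‖ ^ 2)
          * ENNReal.ofReal (‖((⇑(lamLin t lam))^[n] (⇑(evec (v : V)))) w‖ ^ 2) := by
  have hentg : ∀ (m : ℕ) (x : V), ((⇑(lamLin t lam))^[m] (⇑(evec x))) w
      = if (∀ j < m, t.hasPar (t.par^[j] w)) ∧ t.par^[m] w = x then t.wprod lam m w else 0 := by
    intro m x
    rw [lamLin_iter t lam m, evec_coe]
    by_cases hc : ∀ j < m, t.hasPar (t.par^[j] w)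
    · by_cases he : t.par^[m] w = x
      · simp [hc, he]
      · simp [hc, he]
    · simp [hc]
  have hent : ∀ v : V, ((⇑(lamLin t lam))^[n] (⇑(evec v))) w
      = if (∀ j < n, t.hasPar (t.par^[j] w)) ∧ t.par^[n] w = v then t.wprod lam n w else 0 :=
    fun v => hentg n v
  have hent1 : ((⇑(lamLin t lam))^[n + 1] (⇑(evec u))) w
      = if (∀ j < n + 1, t.hasPar (t.par^[j] w)) ∧ t.par^[n + 1] w = u
          then t.wprod lam (n + 1) w else 0 := hentg (n + 1) u
  by_cases hcase : (∀ j < n, t.hasPar (t.par^[j] w)) ∧ t.par^[n] w ∈ t.chi u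
  · obtain ⟨hc, hv0⟩ := hcase
    have hpp := (mem_chi_iff t).mp hv0
    have hc1 : ∀ j < n + 1, t.hasPar (t.par^[j] w) := by
      intro j hj
      rcases Nat.lt_succ_iff_lt_or_eq.mp hj with h | h
      · exact hc j h
      · subst h; exact hpp.1
    have he1 : t.par^[n + 1] w = u := by
      rw [Function.iterate_succ_apply']
      exact hpp.2
    rw [hent1, if_pos ⟨hc1, he1⟩]
    rw [tsum_eq_single (⟨t.par^[n] w, hv0⟩ : t.chi u)]
    · rw [hent, if_pos ⟨hc, rfl⟩, Paper.DirectedTree.wprod, Finset.prod_range_succ,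
        ← Paper.DirectedTree.wprod]
      rw [← ENNReal.ofReal_mul (by positivity)]
      congr 1
      rw [norm_mul, mul_pow]
      ring
    · intro v hv
      rw [hent, if_neg, norm_zero]
      · simp
      · rintro ⟨-, hvv⟩
        exact hv (Subtype.ext hvv.symm)
  · have hz : ∀ v : t.chi u, ((⇑(lamLin t lam))^[n] (⇑(evec (v : V)))) w = 0 := by
      intro v
      rw [hent, if_neg]
      rintro ⟨hc, hvv⟩
      exact hcase ⟨hc, hvv ▸ v.2⟩
    rw [hent1, if_neg]
    · simp only [hz, norm_zero]
      simp
    · rintro ⟨hc1, he1⟩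
      refine hcase ⟨fun j hj => hc1 j (by omega), ?_⟩
      rw [mem_chi_iff]
      refine ⟨hc1 n (by omega), ?_⟩
      rw [Function.iterate_succ_apply'] at he1
      exact he1

lemma keyA (hdom : spanDomInfty t lam) (u : V) (n : ℕ) :
    ENNReal.ofReal (‖iterApp (shift t lam) (n + 1) (evec u)‖ ^ 2)
      = ∑' v : t.chi u, ENNReal.ofReal (‖lam (v : V)‖ ^ 2)
          * ENNReal.ofReal (‖iterApp (shift t lam) n (evec (v : V))‖ ^ 2) := by
  have hm : ∀ (w : V) (m : ℕ), iterMem (shift t lam) m (evec w) :=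
    fun w m => hdom _ (Submodule.subset_span ⟨w, rfl⟩) m
  have eF : ∀ (w : V) (m : ℕ), ENNReal.ofReal (‖iterApp (shift t lam) m (evec w)‖ ^ 2)
      = ∑' x : V, ENNReal.ofReal (‖((⇑(lamLin t lam))^[m] (⇑(evec w))) x‖ ^ 2) := by
    intro w m
    rw [esq, iterApp_coe t lam m _ (hm w m)]
  rw [eF u (n + 1)]
  calc ∑' x : V, ENNReal.ofReal (‖((⇑(lamLin t lam))^[n + 1] (⇑(evec u))) x‖ ^ 2)
      = ∑' x : V, ∑' v : t.chi u, ENNReal.ofReal (‖lam (v : V)‖ ^ 2)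
          * ENNReal.ofReal (‖((⇑(lamLin t lam))^[n] (⇑(evec (v : V)))) x‖ ^ 2) :=
        tsum_congr fun x => pointwise t lam u n x
    _ = ∑' v : t.chi u, ∑' x : V, ENNReal.ofReal (‖lam (v : V)‖ ^ 2)
          * ENNReal.ofReal (‖((⇑(lamLin t lam))^[n] (⇑(evec (v : V)))) x‖ ^ 2) :=
        ENNReal.tsum_comm
    _ = _ := tsum_congr fun v => by rw [ENNReal.tsum_mul_left, ← eF]

lemma norm_evec (u : V) : ENNReal.ofReal (‖iterApp (shift t lam) 0 (evec u)‖ ^ 2) = 1 := by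
  show ENNReal.ofReal (‖evec u‖ ^ 2) = 1
  rw [esq]
  rw [tsum_eq_single u]
  · rw [evec_coe, if_pos rfl]
    simp
  · intro w hw
    rw [evec_coe, if_neg hw]
    simp

end NormPart
section MeasurePart
open MeasureTheory

lemma ae_nonneg_of_null {μ : Measure ℝ} (h0 : μ (Set.Iio 0) = 0) : ∀ᵐ s ∂μ, 0 ≤ s := by
  rw [ae_iff]
  convert h0 using 2
  ext s
  simp [not_le]

lemma lint_rep {μ : Measure ℝ} {a : ℕ → ℝ} (h : IsRepMeasure μ a) (n : ℕ) :
    ∫⁻ s, ENNReal.ofReal (s ^ n) ∂μ = ENNReal.ofReal (a n) := by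
  have hnn : 0 ≤ᵐ[μ] fun s => s ^ n :=
    (ae_nonneg_of_null h.1).mono fun s hs => pow_nonneg hs n
  rw [(h.2 n).2]
  exact (ofReal_integral_eq_lintegral_ofReal (h.2 n).1 hnn).symm

lemma rep_of_lint {μ : Measure ℝ} {a : ℕ → ℝ} (h0 : μ (Set.Iio 0) = 0)
    (hl : ∀ n, ∫⁻ s, ENNReal.ofReal (s ^ n) ∂μ = ENNReal.ofReal (a n))
    (ha : ∀ n, 0 ≤ a n) : IsRepMeasure μ a := by
  have hnn : ∀ n : ℕ, 0 ≤ᵐ[μ] fun s : ℝ => s ^ n := fun n =>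
    (ae_nonneg_of_null h0).mono fun s hs => pow_nonneg hs n
  refine ⟨h0, fun n => ?_⟩
  have hint : Integrable (fun s : ℝ => s ^ n) μ := by
    refine ⟨(continuous_pow n).aestronglyMeasurable, ?_⟩
    rw [hasFiniteIntegral_iff_ofReal (hnn n), hl n]
    exact ENNReal.ofReal_lt_top
  refine ⟨hint, ?_⟩
  have h2 := ofReal_integral_eq_lintegral_ofReal hint (hnn n)
  rw [hl n] at h2
  exact ((ENNReal.ofReal_eq_ofReal_iff (integral_nonneg_of_ae (hnn n)) (ha n)).mp h2).symm

lemma meas_pow (n : ℕ) : Measurable fun s : ℝ => ENNReal.ofReal (s ^ n) :=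
  ENNReal.measurable_ofReal.comp (measurable_id.pow_const n)

lemma meas_inv : Measurable fun s : ℝ => (ENNReal.ofReal s)⁻¹ :=
  ENNReal.measurable_ofReal.inv

lemma mul_inv_indicator :
    ((fun s : ℝ => ENNReal.ofReal s) * fun s : ℝ => (ENNReal.ofReal s)⁻¹)
      = Set.indicator (Set.Ioi 0) 1 := by
  funext s
  rw [Pi.mul_apply]
  by_cases hs : 0 < s
  · rw [ENNReal.mul_inv_cancel (by simpa [ENNReal.ofReal_pos] using hs) ENNReal.ofReal_ne_top,
      Set.indicator_of_mem (Set.mem_Ioi.mpr hs)]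
    rfl
  · rw [Set.indicator_of_notMem (by simpa using hs),
      ENNReal.ofReal_eq_zero.mpr (not_lt.mp hs), zero_mul]

lemma child_term {μv : Measure ℝ} {av : ℕ → ℝ} (hrepv : IsRepMeasure μv av)
    (c : ℝ≥0∞) (hc : c * recipInt μv Set.univ ≤ 1) (n : ℕ) :
    c * ∫⁻ s, (ENNReal.ofReal s)⁻¹ * ENNReal.ofReal (s ^ (n + 1)) ∂μv
      = c * ENNReal.ofReal (av n) := by
  by_cases hc0 : c = 0
  · simp [hc0]
  have hfin : recipInt μv Set.univ ≠ ∞ := by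
    intro htop
    rw [htop, ENNReal.mul_top hc0] at hc
    exact (by simp : ¬(⊤ : ℝ≥0∞) ≤ 1) hc
  have h0 : μv {0} = 0 := by
    by_contra h
    apply hfin
    have hge : (⊤ : ℝ≥0∞) * μv {0} ≤ recipInt μv Set.univ := by
      rw [recipInt, Measure.restrict_univ]
      calc (⊤ : ℝ≥0∞) * μv {0}
          = ∫⁻ s in ({0} : Set ℝ), (ENNReal.ofReal s)⁻¹ ∂μv := by
            rw [Measure.restrict_singleton, lintegral_smul_measure, lintegral_dirac]
            simp [mul_comm]
        _ ≤ _ := setLIntegral_le_lintegral _ _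
    rw [ENNReal.top_mul h] at hge
    exact top_le_iff.mp hge
  have hpos : ∀ᵐ s ∂μv, 0 < s := by
    have h1 : ∀ᵐ s ∂μv, 0 ≤ s := ae_nonneg_of_null hrepv.1
    have h2 : ∀ᵐ s ∂μv, s ≠ 0 := by
      rw [ae_iff]
      simpa using h0
    filter_upwards [h1, h2] with s hs hs'
    exact lt_of_le_of_ne hs (Ne.symm hs')
  have heq : ∫⁻ s, (ENNReal.ofReal s)⁻¹ * ENNReal.ofReal (s ^ (n + 1)) ∂μv
      = ∫⁻ s, ENNReal.ofReal (s ^ n) ∂μv := by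
    apply lintegral_congr_ae
    filter_upwards [hpos] with s hs
    have hne : ENNReal.ofReal s ≠ 0 := (ENNReal.ofReal_pos.mpr hs).ne'
    calc (ENNReal.ofReal s)⁻¹ * ENNReal.ofReal (s ^ (n + 1))
        = (ENNReal.ofReal s)⁻¹ * (ENNReal.ofReal s * ENNReal.ofReal (s ^ n)) := by
          rw [← ENNReal.ofReal_mul hs.le, ← pow_succ']
      _ = ENNReal.ofReal (s ^ n) := by
          rw [← mul_assoc, ENNReal.inv_mul_cancel hne ENNReal.ofReal_ne_top, one_mul]
  rw [heq, lint_rep hrepv n]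

section WithTree

variable {V : Type*} (t : Paper.DirectedTree V) (lam : V → ℂ)

lemma cons_lint_general (u : V) (μ : V → Measure ℝ) (n : ℕ) :
    ∫⁻ s, ENNReal.ofReal (s ^ n) ∂(consMeasure t lam μ u)
      = (∑' v : t.chi u, ENNReal.ofReal (‖lam (v : V)‖ ^ 2)
            * ∫⁻ s, (ENNReal.ofReal s)⁻¹ * ENNReal.ofReal (s ^ n) ∂(μ (v : V)))
        + (1 - ∑' v : t.chi u,
            ENNReal.ofReal (‖lam (v : V)‖ ^ 2) * recipInt (μ (v : V)) Set.univ)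
            * ENNReal.ofReal ((0 : ℝ) ^ n) := by
  rw [Paper.consMeasure, lintegral_add_measure, lintegral_sum_measure]
  congr 1
  · refine tsum_congr fun v => ?_
    rw [lintegral_smul_measure, smul_eq_mul,
      lintegral_withDensity_eq_lintegral_mul _ meas_inv (meas_pow n)]
    simp only [Pi.mul_apply]
  · rw [lintegral_smul_measure, lintegral_dirac, smul_eq_mul]

lemma cons_null (u : V) (μ : V → Measure ℝ) (h0 : ∀ v ∈ t.chi u, μ v (Set.Iio 0) = 0) :
    consMeasure t lam μ u (Set.Iio 0) = 0 := by
  rw [Paper.consMeasure, Measure.add_apply, Measure.sum_apply _ measurableSet_Iio]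
  have h1 : ∀ v : t.chi u,
      (ENNReal.ofReal (‖lam (v : V)‖ ^ 2) •
        (μ (v : V)).withDensity fun s => (ENNReal.ofReal s)⁻¹) (Set.Iio 0) = 0 := by
    intro v
    rw [Measure.smul_apply, smul_eq_mul, withDensity_apply _ measurableSet_Iio,
      Measure.restrict_eq_zero.mpr (h0 v v.2), lintegral_zero_measure, mul_zero]
  have h2 : ((1 - ∑' v : t.chi u,
      ENNReal.ofReal (‖lam (v : V)‖ ^ 2) * recipInt (μ (v : V)) Set.univ) •
        Measure.dirac (0 : ℝ)) (Set.Iio 0) = 0 := by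
    rw [Measure.smul_apply, smul_eq_mul, Measure.dirac_apply' _ measurableSet_Iio,
      Set.indicator_of_notMem (by simp), mul_zero]
  simp only [h1, h2, tsum_zero, add_zero]

lemma cons_lint (hdom : spanDomInfty t lam) (u : V) (μ : V → Measure ℝ)
    (hrep : ∀ v ∈ t.chi u,
      IsRepMeasure (μ v) fun n => ‖iterApp (shift t lam) n (evec v)‖ ^ 2)
    (hS : (∑' v : t.chi u,
      ENNReal.ofReal (‖lam (v : V)‖ ^ 2) * recipInt (μ (v : V)) Set.univ) ≤ 1) (n : ℕ) :
    ∫⁻ s, ENNReal.ofReal (s ^ n) ∂(consMeasure t lam μ u)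
      = ENNReal.ofReal (‖iterApp (shift t lam) n (evec u)‖ ^ 2) := by
  rw [cons_lint_general]
  cases n with
  | zero =>
    rw [norm_evec]
    simp only [pow_zero, ENNReal.ofReal_one, mul_one]
    have h1 : ∀ v : t.chi u, ∫⁻ s, (ENNReal.ofReal s)⁻¹ ∂(μ (v : V))
        = recipInt (μ (v : V)) Set.univ := by
      intro v
      rw [recipInt, Measure.restrict_univ]
    simp only [h1]
    rw [add_comm]
    exact tsub_add_cancel_of_le hS
  | succ n =>
    rw [zero_pow (Nat.succ_ne_zero n), ENNReal.ofReal_zero, mul_zero, add_zero,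
      keyA t lam hdom u n]
    exact tsum_congr fun v =>
      child_term (hrep v v.2) _ (le_trans (ENNReal.le_tsum v) hS) n

end WithTree

end MeasurePart
section PartTwo
open MeasureTheory

variable {V : Type*} (t : Paper.DirectedTree V) (lam : V → ℂ)

lemma nu_lint (hdom : spanDomInfty t lam) (u : V) (μ : V → Measure ℝ)
    (hrep : ∀ v ∈ t.chi u,
      IsRepMeasure (μ v) fun n => ‖iterApp (shift t lam) n (evec v)‖ ^ 2) (n : ℕ) :
    ∫⁻ s, ENNReal.ofReal (s ^ n)
        ∂(Measure.sum fun v : t.chi u => ENNReal.ofReal (‖lam (v : V)‖ ^ 2) • μ (v : V))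
      = ENNReal.ofReal (‖iterApp (shift t lam) (n + 1) (evec u)‖ ^ 2) := by
  rw [lintegral_sum_measure, keyA t lam hdom u n]
  exact tsum_congr fun v => by rw [lintegral_smul_measure, smul_eq_mul, lint_rep (hrep v v.2) n]

lemma nu_rep (hdom : spanDomInfty t lam) (u : V) (μ : V → Measure ℝ)
    (hrep : ∀ v ∈ t.chi u,
      IsRepMeasure (μ v) fun n => ‖iterApp (shift t lam) n (evec v)‖ ^ 2) :
    IsRepMeasure (Measure.sum fun v : t.chi u => ENNReal.ofReal (‖lam (v : V)‖ ^ 2) • μ (v : V))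
      (fun n => ‖iterApp (shift t lam) (n + 1) (evec u)‖ ^ 2) := by
  refine rep_of_lint ?_ (nu_lint t lam hdom u μ hrep) fun n => by positivity
  rw [Measure.sum_apply _ measurableSet_Iio]
  have h1 : ∀ v : t.chi u,
      (ENNReal.ofReal (‖lam (v : V)‖ ^ 2) • μ (v : V)) (Set.Iio 0) = 0 := by
    intro v
    rw [Measure.smul_apply, smul_eq_mul, (hrep v v.2).1, mul_zero]
  simp only [h1, tsum_zero]

lemma mum_rep {ρ : Measure ℝ} {a : ℕ → ℝ} (hρ : IsRepMeasure ρ a) :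
    IsRepMeasure (ρ.withDensity fun s => ENNReal.ofReal s) (fun n => a (n + 1)) := by
  have hl : ∀ n : ℕ, ∫⁻ s, ENNReal.ofReal (s ^ n) ∂(ρ.withDensity fun s => ENNReal.ofReal s)
      = ENNReal.ofReal (a (n + 1)) := by
    intro n
    rw [lintegral_withDensity_eq_lintegral_mul _ ENNReal.measurable_ofReal (meas_pow n)]
    have heq : ∫⁻ s, ((fun s : ℝ => ENNReal.ofReal s) * fun s => ENNReal.ofReal (s ^ n)) s ∂ρ
        = ∫⁻ s, ENNReal.ofReal (s ^ (n + 1)) ∂ρ := by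
      apply lintegral_congr_ae
      filter_upwards [ae_nonneg_of_null hρ.1] with s hs
      rw [Pi.mul_apply, ← ENNReal.ofReal_mul hs, ← pow_succ']
    rw [heq, lint_rep hρ (n + 1)]
  have h0 : (ρ.withDensity fun s => ENNReal.ofReal s) (Set.Iio 0) = 0 := by
    rw [withDensity_apply _ measurableSet_Iio, Measure.restrict_eq_zero.mpr hρ.1,
      lintegral_zero_measure]
  refine rep_of_lint h0 hl fun n => ?_
  have := integral_nonneg_of_ae ((ae_nonneg_of_null hρ.1).mono
    fun s hs => pow_nonneg hs (n + 1))
  rw [← (hρ.2 (n + 1)).2] at this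
  exact this

lemma rho_univ (u : V) {ρ : Measure ℝ}
    (hρ : IsRepMeasure ρ fun n => ‖iterApp (shift t lam) n (evec u)‖ ^ 2) :
    ρ Set.univ = 1 := by
  have h := lint_rep hρ 0
  simp only [pow_zero, ENNReal.ofReal_one] at h
  rw [lintegral_one] at h
  rw [h]
  exact norm_evec t lam u

/-- The key uniqueness argument for part (ii). -/
lemma key_eq (hdom : spanDomInfty t lam) (u : V) (μ : V → Measure ℝ)
    (hrep : ∀ v ∈ t.chi u,
      IsRepMeasure (μ v) fun n => ‖iterApp (shift t lam) n (evec v)‖ ^ 2)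
    (hdet : Determinate fun n => ‖iterApp (shift t lam) (n + 1) (evec u)‖ ^ 2)
    (ρ : Measure ℝ)
    (hρ : IsRepMeasure ρ fun n => ‖iterApp (shift t lam) n (evec u)‖ ^ 2) :
    (∑' v : t.chi u,
      ENNReal.ofReal (‖lam (v : V)‖ ^ 2) * recipInt (μ (v : V)) Set.univ) ≤ 1 ∧
    ρ = consMeasure t lam μ u := by
  set ν : Measure ℝ :=
    Measure.sum (fun v : t.chi u => ENNReal.ofReal (‖lam (v : V)‖ ^ 2) • μ (v : V)) with hν
  have hρν : ρ.withDensity (fun s => ENNReal.ofReal s) = ν :=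
    hdet (mum_rep hρ) (nu_rep t lam hdom u μ hrep)
  -- ν.withDensity (1/s) = ρ.restrict (Ioi 0)
  have e2 : ν.withDensity (fun s => (ENNReal.ofReal s)⁻¹) = ρ.restrict (Set.Ioi 0) := by
    rw [← hρν, ← withDensity_mul _ ENNReal.measurable_ofReal meas_inv, mul_inv_indicator]
    exact withDensity_indicator_one measurableSet_Ioi
  -- the sum part of consMeasure equals ν.withDensity (1/s)
  have e1 : ν.withDensity (fun s => (ENNReal.ofReal s)⁻¹)
      = Measure.sum (fun v : t.chi u => ENNReal.ofReal (‖lam (v : V)‖ ^ 2) •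
          (μ (v : V)).withDensity fun s => (ENNReal.ofReal s)⁻¹) := by
    rw [hν, withDensity_sum]
    congr 1
    funext v
    exact withDensity_smul_measure _ _
  -- R = ρ (Ioi 0)
  have hR : (∑' v : t.chi u,
      ENNReal.ofReal (‖lam (v : V)‖ ^ 2) * recipInt (μ (v : V)) Set.univ)
      = ρ (Set.Ioi 0) := by
    have h3 : (∑' v : t.chi u,
        ENNReal.ofReal (‖lam (v : V)‖ ^ 2) * recipInt (μ (v : V)) Set.univ)
        = ∫⁻ s, (ENNReal.ofReal s)⁻¹ ∂ν := by
      rw [hν, lintegral_sum_measure]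
      exact (tsum_congr fun v => by
        rw [lintegral_smul_measure, smul_eq_mul, recipInt, Measure.restrict_univ]).symm
    rw [h3, ← setLIntegral_univ, ← withDensity_apply _ MeasurableSet.univ, e2,
      Measure.restrict_apply MeasurableSet.univ, Set.univ_inter]
  have huniv : ρ Set.univ = 1 := rho_univ t lam u hρ
  have hR_le : (∑' v : t.chi u,
      ENNReal.ofReal (‖lam (v : V)‖ ^ 2) * recipInt (μ (v : V)) Set.univ) ≤ 1 := by
    rw [hR, ← huniv]
    exact measure_mono (Set.subset_univ _)
  refine ⟨hR_le, ?_⟩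
  -- split ρ
  have hIic : Set.Iic (0 : ℝ) = Set.Iio 0 ∪ {0} := by
    ext x
    simp [le_iff_lt_or_eq]
  have hrIic : ρ.restrict (Set.Iic 0) = ρ.restrict {0} := by
    rw [hIic, Measure.restrict_union (Set.disjoint_singleton_right.mpr (by simp)) (measurableSet_singleton 0),
      Measure.restrict_eq_zero.mpr hρ.1, zero_add]
  have hsplit : ρ (Set.Ioi 0) + ρ {0} = 1 := by
    have h1 := measure_add_measure_compl (μ := ρ) (s := Set.Ioi (0:ℝ)) measurableSet_Ioi
    rw [Set.compl_Ioi, huniv] at h1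
    have h2 : ρ (Set.Iic 0) = ρ {0} := by
      conv_lhs => rw [← Measure.restrict_apply_univ, hrIic]
      rw [Measure.restrict_apply_univ]
    rw [h2] at h1
    exact h1
  have hρ0 : ρ {0} = 1 - ρ (Set.Ioi 0) := by
    rw [← hsplit, ENNReal.add_sub_cancel_left]
    exact ne_top_of_le_ne_top ENNReal.one_ne_top (hR ▸ hR_le)
  -- final decomposition
  rw [Paper.consMeasure, ← e1, e2, hR, ← hρ0]
  conv_lhs => rw [← Measure.restrict_add_restrict_compl (μ := ρ) (s := Set.Ioi (0:ℝ)) measurableSet_Ioi]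
  congr 1
  rw [Set.compl_Ioi, hrIic, Measure.restrict_singleton]

end PartTwo
open scoped ENNReal


/-- the consistency condition at a vertex versus backward extendibility. -/
theorem stmt12 {V : Type*} (t : Paper.DirectedTree V) (lam : V → ℂ)
    (hdom : spanDomInfty t lam) (u : V) (hne : (t.chi u).Nonempty)
    (μ : V → Measure ℝ)
    (hrep : ∀ v ∈ t.chi u,
      IsRepMeasure (μ v) fun n => ‖iterApp (shift t lam) n (evec v)‖ ^ 2) :
    ((∑' v : t.chi u, ENNReal.ofReal (‖lam (v : V)‖ ^ 2) * recipInt (μ (v : V)) Set.univ) ≤ 1 →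
      IsStieltjes (fun n => ‖iterApp (shift t lam) n (evec u)‖ ^ 2) ∧
      IsRepMeasure (consMeasure t lam μ u)
        fun n => ‖iterApp (shift t lam) n (evec u)‖ ^ 2) ∧
    (IsStieltjes (fun n => ‖iterApp (shift t lam) n (evec u)‖ ^ 2) →
      Determinate (fun n => ‖iterApp (shift t lam) (n + 1) (evec u)‖ ^ 2) →
      (∑' v : t.chi u, ENNReal.ofReal (‖lam (v : V)‖ ^ 2) * recipInt (μ (v : V)) Set.univ) ≤ 1 ∧
      Determinate (fun n => ‖iterApp (shift t lam) n (evec u)‖ ^ 2) ∧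
      IsRepMeasure (consMeasure t lam μ u)
        fun n => ‖iterApp (shift t lam) n (evec u)‖ ^ 2) := by
  constructor
  · intro hS
    have h0 : ∀ v ∈ t.chi u, μ v (Set.Iio 0) = 0 := fun v hv => (hrep v hv).1
    have hrepc : IsRepMeasure (consMeasure t lam μ u)
        (fun n => ‖iterApp (shift t lam) n (evec u)‖ ^ 2) :=
      rep_of_lint (cons_null t lam u μ h0) (cons_lint t lam hdom u μ hrep hS)
        (fun n => by positivity)
    exact ⟨⟨_, hrepc⟩, hrepc⟩
  · intro hst hdet
    obtain ⟨ρ₀, hρ₀⟩ := hst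
    obtain ⟨hle, heq⟩ := key_eq t lam hdom u μ hrep hdet ρ₀ hρ₀
    refine ⟨hle, ?_, heq ▸ hρ₀⟩
    intro μ1 μ2 h1 h2
    rw [(key_eq t lam hdom u μ hrep hdet μ1 h1).2, (key_eq t lam hdom u μ hrep hdet μ2 h2).2]
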